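/- arXiv:2011.09049 — 2 statements merged into one kernel-verified Lean document; each statement's English description precedes it below -/
import Mathlib

section
/- For the two-player cooperative game v on {1,2} with v(∅)=0, v({1})=1, v({2})=2, v({1,2})=4, and weights ω₁=1, ω₂=3, the weighted Shapley values are φ^ω₁(v)=5/4 and φ^ω₂(v)=11/4, and for each of the three possible permission structures on {1,2} (S(1)=S(2)=∅; S(1)=∅,S(2)={1}; S(1)={2},S(2)=∅) the Shapley value of the projected game v' differs from (5/4, 11/4). Hence no permission structure reproduces this weighted Shapley value. -/
open Finset
open scoped Classical

/-- Harsanyi dividend of coalition `E` in game `v`. -/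
noncomputable def dividend {α : Type*} [DecidableEq α] (v : Finset α → ℝ) (E : Finset α) : ℝ :=
  ∑ F ∈ E.powerset, (-1 : ℝ) ^ (E.card - F.card) * v F

/-- Weighted Shapley value with weights `ω`. -/
noncomputable def wShapley {α : Type*} [Fintype α] [DecidableEq α]
    (ω : α → ℝ) (v : Finset α → ℝ) (i : α) : ℝ :=
  ∑ E ∈ (univ : Finset α).powerset,
    if i ∈ E then dividend v E * ω i / (∑ j ∈ E, ω j) else 0

/-- Ordinary Shapley value. -/
noncomputable def shapley {α : Type*} [Fintype α] [DecidableEq α]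
    (v : Finset α → ℝ) (i : α) : ℝ :=
  wShapley (fun _ => 1) v i

/-- `E` is autonomous in the permission structure `S`. -/
def autonomous {α : Type*} (S : α → Finset α) (E : Finset α) : Prop :=
  ∀ i ∈ E, S i ⊆ E

/-- The autonomous part `α(E)`: the union of all autonomous subsets of `E`. -/
noncomputable def autPart {α : Type*} [DecidableEq α] (S : α → Finset α) (E : Finset α) :
    Finset α :=
  (E.powerset.filter (autonomous S)).sup id

/-- The projection of `v` on the permission structure `S`. -/
noncomputable def proj {α : Type*} [DecidableEq α] (S : α → Finset α) (v : Finset α → ℝ)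
    (E : Finset α) : ℝ :=
  v (autPart S E)

/-- Computable version of `autPart`. -/
def autPart' {α : Type*} [DecidableEq α] (S : α → Finset α) (E : Finset α) : Finset α :=
  (E.powerset.filter (fun F => ∀ i ∈ F, S i ⊆ F)).sup id

lemma autPart_eq {α : Type*} [DecidableEq α] (S : α → Finset α) (E : Finset α) :
    autPart S E = autPart' S E := by
  unfold autPart autPart'
  congr 1
  ext F
  simp [autonomous]

lemma pow2 : (univ : Finset (Fin 2)).powerset
    = ({∅, {0}, {1}, {0,1}} : Finset (Finset (Fin 2))) := by decide

lemma pow01 : ({0,1} : Finset (Fin 2)).powerset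
    = ({∅, {0}, {1}, {0,1}} : Finset (Finset (Fin 2))) := by decide

lemma pow0 : ({0} : Finset (Fin 2)).powerset = ({∅, {0}} : Finset (Finset (Fin 2))) := by decide

lemma pow1 : ({1} : Finset (Fin 2)).powerset = ({∅, {1}} : Finset (Finset (Fin 2))) := by decide

lemma finset_cases0 (t : Finset (Fin 2)) (h : (0 : Fin 2) ∉ t) : t = ∅ ∨ t = {1} := by
  revert h; revert t; decide

lemma finset_cases1 (t : Finset (Fin 2)) (h : (1 : Fin 2) ∉ t) : t = ∅ ∨ t = {0} := by
  revert h; revert t; decide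

theorem stmt1 (v : Finset (Fin 2) → ℝ)
    (hv : v = fun E =>
      if E = {0, 1} then 4 else if E = {1} then 2 else if E = {0} then 1 else 0)
    (ω : Fin 2 → ℝ) (hω : ω = ![1, 3]) :
    wShapley ω v 0 = 5 / 4 ∧ wShapley ω v 1 = 11 / 4 ∧
      ∀ S : Fin 2 → Finset (Fin 2), (∀ i j, j ∈ S i → i ∉ S j) →
        ¬ (shapley (proj S v) 0 = 5 / 4 ∧ shapley (proj S v) 1 = 11 / 4) := by
  subst hv hω
  refine ⟨?_, ?_, ?_⟩
  · rw [wShapley, pow2]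
    simp only [dividend]
    simp (config := { decide := true }) [pow01, pow0, pow1, Finset.sum_insert,
      Finset.mem_insert, Finset.sum_singleton]
    norm_num
  · rw [wShapley, pow2]
    simp only [dividend]
    simp (config := { decide := true }) [pow01, pow0, pow1, Finset.sum_insert,
      Finset.mem_insert, Finset.sum_singleton]
    norm_num
  · intro S hS ⟨h0, _⟩
    have h00 : (0 : Fin 2) ∉ S 0 := fun h => hS 0 0 h h
    have h11 : (1 : Fin 2) ∉ S 1 := fun h => hS 1 1 h h
    rcases finset_cases0 (S 0) h00 with hs0 | hs0 <;>
      rcases finset_cases1 (S 1) h11 with hs1 | hs1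
    · have hSfun : S = ![∅, ∅] := by
        funext i; fin_cases i <;> simp [hs0, hs1]
      rw [hSfun] at h0
      rw [shapley, wShapley, pow2] at h0
      simp only [proj, autPart_eq, dividend] at h0
      simp (config := { decide := true }) [pow01, pow0, pow1, Finset.sum_insert,
        Finset.mem_insert, Finset.sum_singleton] at h0
      norm_num at h0
    · have hSfun : S = ![∅, {0}] := by
        funext i; fin_cases i <;> simp [hs0, hs1]
      rw [hSfun] at h0
      rw [shapley, wShapley, pow2] at h0
      simp only [proj, autPart_eq, dividend] at h0
      simp (config := { decide := true }) [pow01, pow0, pow1, Finset.sum_insert,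
        Finset.mem_insert, Finset.sum_singleton] at h0
      norm_num at h0
    · have hSfun : S = ![{1}, ∅] := by
        funext i; fin_cases i <;> simp [hs0, hs1]
      rw [hSfun] at h0
      rw [shapley, wShapley, pow2] at h0
      simp only [proj, autPart_eq, dividend] at h0
      simp (config := { decide := true }) [pow01, pow0, pow1, Finset.sum_insert,
        Finset.mem_insert, Finset.sum_singleton] at h0
      norm_num at h0
    · exact absurd (hS 0 1 (by rw [hs0]; exact Finset.mem_singleton_self 1))
        (by rw [hs1]; simp)
end

section
/- For any game v with v(∅)=0 and mixed permission structure ϱ on finite N, the permission restriction admits the dividend expansion P_ϱ(v) = ∑_{E∈A_ϱ} ( ∑_{F: E∈Λ*(F)} d^{P_ϱ(u_F)}(E) · d^v(F) ) · u_E, where A_ϱ is the set of autonomous coalitions. -/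
open Finset
open scoped Classical

/-- The unanimity game `u_E`. -/
noncomputable def unanim {α : Type*} [DecidableEq α] (E F : Finset α) : ℝ :=
  if E ⊆ F then 1 else 0

/-- The autonomous part of `E` relative to a family `A` of autonomous coalitions:
the union of all members of `A` contained in `E`. -/
def autPartA {α : Type*} [DecidableEq α] (A : Finset (Finset α)) (E : Finset α) : Finset α :=
  (E.powerset.filter (· ∈ A)).sup id

/-- `Λ(E)`: the minimal autonomous coalitions containing `E`. -/
def LamSet {α : Type*} [DecidableEq α] (A : Finset (Finset α)) (E : Finset α) :
    Finset (Finset α) :=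
  A.filter (fun F => E ⊆ F ∧ ∀ G ∈ A, E ⊆ G → G ⊆ F → G = F)

/-- `F ∈ Λ*(E)`: `F` is a union of (finitely many, at least one) members of `Λ(E)`. -/
def LamStar {α : Type*} [DecidableEq α] (A : Finset (Finset α)) (E F : Finset α) : Prop :=
  ∃ T ⊆ LamSet A E, T.Nonempty ∧ F = T.sup id

section
variable {α : Type*} [DecidableEq α]

lemma sum_neg_one_pow (D : Finset α) :
    ∑ C ∈ D.powerset, (-1:ℝ)^C.card = if D = ∅ then 1 else 0 := by
  have h := Finset.sum_powerset_neg_one_pow_card (x := D)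
  have := congrArg (fun z : ℤ => (z : ℝ)) h
  push_cast at this
  simpa using this

lemma core (B G : Finset α) (hBG : B ⊆ G) :
    ∑ E ∈ G.powerset.filter (fun E => B ⊆ E), (-1:ℝ)^(E.card - B.card)
      = if G = B then 1 else 0 := by
  have key : ∑ E ∈ G.powerset.filter (fun E => B ⊆ E), (-1:ℝ)^(E.card - B.card)
      = ∑ C ∈ (G \ B).powerset, (-1:ℝ)^C.card := by
    refine Finset.sum_nbij' (fun E => E \ B) (fun C => B ∪ C) ?_ ?_ ?_ ?_ ?_
    · intro E hE
      simp only [mem_filter, mem_powerset] at hE ⊢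
      exact sdiff_subset_sdiff hE.1 subset_rfl
    · intro C hC
      simp only [mem_powerset] at hC
      simp only [mem_filter, mem_powerset]
      exact ⟨union_subset hBG ((hC.trans (sdiff_subset)) ), subset_union_left⟩
    · intro E hE
      simp only [mem_filter, mem_powerset] at hE
      exact union_sdiff_of_subset hE.2
    · intro C hC
      simp only [mem_powerset] at hC
      have hdisj : Disjoint B C :=
        Finset.disjoint_left.2 fun a haB haC => (Finset.mem_sdiff.1 (hC haC)).2 haB
      exact union_sdiff_cancel_left hdisj
    · intro E hE
      simp only [mem_filter, mem_powerset] at hE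
      rw [card_sdiff_of_subset hE.2]
  rw [key, sum_neg_one_pow]
  congr 1
  rw [sdiff_eq_empty_iff_subset]
  simp only [eq_iff_iff]
  exact ⟨fun h => subset_antisymm h hBG, fun h => h ▸ subset_rfl⟩

end

section
variable {α : Type*} [DecidableEq α]


lemma core2 (S E : Finset α) (hSE : S ⊆ E) :
    ∑ F ∈ E.powerset.filter (fun F => S ⊆ F), (-1:ℝ)^(E.card - F.card)
      = if E = S then 1 else 0 := by
  have key : ∑ F ∈ E.powerset.filter (fun F => S ⊆ F), (-1:ℝ)^(E.card - F.card)
      = ∑ C ∈ (E \ S).powerset, (-1:ℝ)^C.card := by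
    refine Finset.sum_nbij' (fun F => E \ F) (fun C => E \ C) ?_ ?_ ?_ ?_ ?_
    · intro F hF
      simp only [Finset.mem_filter, Finset.mem_powerset] at hF ⊢
      exact sdiff_subset_sdiff subset_rfl hF.2
    · intro C hC
      simp only [Finset.mem_powerset] at hC
      simp only [Finset.mem_filter, Finset.mem_powerset]
      refine ⟨sdiff_subset, ?_⟩
      intro a haS
      simp only [Finset.mem_sdiff]
      refine ⟨hSE haS, fun haC => ?_⟩
      exact (Finset.mem_sdiff.1 (hC haC)).2 haS
    · intro F hF
      simp only [Finset.mem_filter, Finset.mem_powerset] at hF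
      exact Finset.sdiff_sdiff_eq_self hF.1
    · intro C hC
      simp only [Finset.mem_powerset] at hC
      exact Finset.sdiff_sdiff_eq_self (hC.trans sdiff_subset)
    · intro F hF
      simp only [Finset.mem_filter, Finset.mem_powerset] at hF
      rw [Finset.card_sdiff_of_subset hF.1]
  rw [key, sum_neg_one_pow]
  congr 1
  rw [sdiff_eq_empty_iff_subset]
  simp only [eq_iff_iff]
  exact ⟨fun h => subset_antisymm h hSE, fun h => h ▸ subset_rfl⟩

lemma dividend_unanim (S E : Finset α) :
    dividend (unanim S) E = if E = S then 1 else 0 := by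
  unfold dividend unanim
  have h0 : (∑ F ∈ E.powerset, (-1:ℝ)^(E.card-F.card) * if S ⊆ F then 1 else 0)
      = ∑ F ∈ E.powerset.filter (fun F => S ⊆ F), (-1:ℝ)^(E.card - F.card) := by
    rw [Finset.sum_filter]
    apply Finset.sum_congr rfl
    intro F _
    by_cases h : S ⊆ F <;> simp [h]
  rw [h0]
  by_cases hSE : S ⊆ E
  · exact core2 S E hSE
  · have h1 : E.powerset.filter (fun F => S ⊆ F) = ∅ := by
      apply Finset.filter_eq_empty_iff.2
      intro F hF hSF
      exact hSE (hSF.trans (Finset.mem_powerset.1 hF))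
    have h2 : E ≠ S := fun h => hSE (h ▸ subset_rfl)
    simp [h1, h2]

lemma dividend_linear {ι : Type*} (s : Finset ι) (c : ι → ℝ) (f : ι → Finset α → ℝ)
    (E : Finset α) :
    dividend (fun G => ∑ i ∈ s, c i * f i G) E = ∑ i ∈ s, c i * dividend (f i) E := by
  unfold dividend
  simp only [Finset.mul_sum]
  rw [Finset.sum_comm]
  apply Finset.sum_congr rfl
  intro i _
  apply Finset.sum_congr rfl
  intro F _
  ring

lemma mobius (w : Finset α → ℝ) (G : Finset α) :
    ∑ E ∈ G.powerset, dividend w E = w G := by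
  unfold dividend
  have step : ∀ E ∈ G.powerset,
      (∑ F ∈ E.powerset, (-1:ℝ)^(E.card - F.card) * w F)
        = ∑ F ∈ G.powerset, if F ⊆ E then (-1:ℝ)^(E.card - F.card) * w F else 0 := by
    intro E hE
    rw [← Finset.sum_filter]
    have hfil : G.powerset.filter (fun F => F ⊆ E) = E.powerset := by
      ext F
      simp only [Finset.mem_filter, Finset.mem_powerset]
      exact ⟨fun h => h.2, fun h => ⟨h.trans (Finset.mem_powerset.1 hE), h⟩⟩
    rw [hfil]
  calc ∑ E ∈ G.powerset, ∑ F ∈ E.powerset, (-1:ℝ)^(E.card - F.card) * w F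
      = ∑ E ∈ G.powerset, ∑ F ∈ G.powerset,
          (if F ⊆ E then (-1:ℝ)^(E.card - F.card) * w F else 0) :=
        Finset.sum_congr rfl step
    _ = ∑ F ∈ G.powerset, ∑ E ∈ G.powerset,
          (if F ⊆ E then (-1:ℝ)^(E.card - F.card) * w F else 0) := Finset.sum_comm
    _ = ∑ F ∈ G.powerset, w F *
          ∑ E ∈ G.powerset.filter (fun E => F ⊆ E), (-1:ℝ)^(E.card - F.card) := by
        apply Finset.sum_congr rfl
        intro F _
        rw [Finset.mul_sum, ← Finset.sum_filter]
        apply Finset.sum_congr rfl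
        intro E _
        ring
    _ = ∑ F ∈ G.powerset, w F * (if G = F then 1 else 0) := by
        apply Finset.sum_congr rfl
        intro F hF
        rw [core F G (Finset.mem_powerset.1 hF)]
    _ = w G := by
        simp only [mul_ite, mul_one, mul_zero]
        rw [Finset.sum_ite_eq]
        simp

end

section structural
variable {α : Type*} [DecidableEq α] (A : Finset (Finset α))
variable (hempty : ∅ ∈ A) (hunion : ∀ E ∈ A, ∀ F ∈ A, E ∪ F ∈ A)

include hempty hunion in
lemma sup_mem_A : ∀ T : Finset (Finset α), (∀ x ∈ T, x ∈ A) → T.sup id ∈ A := by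
  intro T
  induction T using Finset.induction_on with
  | empty => intro _; simpa using hempty
  | @insert a s hx ih =>
    intro h
    rw [Finset.sup_insert]
    exact hunion a (h a (Finset.mem_insert_self a s)) _
      (ih fun x hx => h x (Finset.mem_insert_of_mem hx))

lemma autPart_subset (G : Finset α) : autPartA A G ⊆ G := by
  show (G.powerset.filter (· ∈ A)).sup id ≤ G
  apply Finset.sup_le
  intro H hH
  exact Finset.mem_powerset.1 (Finset.mem_filter.1 hH).1

include hempty hunion in
lemma autPart_mem (G : Finset α) : autPartA A G ∈ A := by
  apply sup_mem_A A hempty hunion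
  intro x hx
  exact (Finset.mem_filter.1 hx).2

include hempty hunion in
lemma subset_autPart_iff (F G : Finset α) :
    F ⊆ autPartA A G ↔ ∃ H ∈ A, F ⊆ H ∧ H ⊆ G := by
  constructor
  · intro h
    exact ⟨autPartA A G, autPart_mem A hempty hunion G, h, autPart_subset A G⟩
  · rintro ⟨H, hHA, hFH, hHG⟩
    have : H ∈ G.powerset.filter (· ∈ A) := by
      simp [Finset.mem_powerset, hHG, hHA]
    exact hFH.trans (Finset.le_sup (f := id) this)

lemma lamSet_mem {L F : Finset α} (h : L ∈ LamSet A F) : L ∈ A ∧ F ⊆ L := by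
  have := Finset.mem_filter.1 h
  exact ⟨this.1, this.2.1⟩

lemma exists_lam {F : Finset α} : ∀ H : Finset α, H ∈ A → F ⊆ H →
    ∃ L ∈ LamSet A F, L ⊆ H := by
  intro H
  induction H using Finset.strongInduction with
  | _ H ih =>
    intro hH hFH
    by_cases hmin : ∀ G ∈ A, F ⊆ G → G ⊆ H → G = H
    · exact ⟨H, Finset.mem_filter.2 ⟨hH, hFH, hmin⟩, subset_rfl⟩
    · push_neg at hmin
      obtain ⟨K, hKA, hFK, hKH, hne⟩ := hmin
      obtain ⟨L, hL, hLK⟩ := ih K (Finset.ssubset_iff_subset_ne.2 ⟨hKH, hne⟩) hKA hFK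
      exact ⟨L, hL, hLK.trans hKH⟩

include hempty hunion in
lemma unanim_autPart (F G : Finset α) :
    unanim F (autPartA A G) = if ∃ L ∈ LamSet A F, L ⊆ G then 1 else 0 := by
  unfold unanim
  congr 1
  simp only [eq_iff_iff]
  rw [subset_autPart_iff A hempty hunion]
  constructor
  · rintro ⟨H, hHA, hFH, hHG⟩
    obtain ⟨L, hL, hLH⟩ := exists_lam A H hHA hFH
    exact ⟨L, hL, hLH.trans hHG⟩
  · rintro ⟨L, hL, hLG⟩
    exact ⟨L, (lamSet_mem A hL).1, (lamSet_mem A hL).2, hLG⟩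

end structural

section expand
variable {α : Type*} [DecidableEq α] (A : Finset (Finset α))
variable (hempty : ∅ ∈ A) (hunion : ∀ E ∈ A, ∀ F ∈ A, E ∪ F ∈ A)

lemma unanim_sup (T : Finset (Finset α)) (G : Finset α) :
    ∏ L ∈ T, unanim L G = unanim (T.sup id) G := by
  unfold unanim
  rw [Finset.prod_boole]
  congr 1
  simp only [eq_iff_iff]
  constructor
  all_goals intro h
  all_goals first
    | exact Finset.sup_le (f := id) (fun L hL => h L hL)
    | (intro L hL; exact subset_trans (Finset.le_sup (f := id) hL) h)

lemma prod_expand (F G : Finset α) :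
    ∑ T ∈ (LamSet A F).powerset, (-1:ℝ)^T.card * unanim (T.sup id) G
      = if ∃ L ∈ LamSet A F, L ⊆ G then 0 else 1 := by
  have h := Finset.prod_add (fun L => -unanim L G) (fun _ => (1:ℝ)) (LamSet A F)
  have h2 : ∀ T ∈ (LamSet A F).powerset,
      (∏ L ∈ T, -unanim L G) * ∏ L ∈ (LamSet A F) \ T, (1:ℝ)
        = (-1:ℝ)^T.card * unanim (T.sup id) G := by
    intro T _
    rw [Finset.prod_const_one, mul_one, ← unanim_sup]
    calc ∏ L ∈ T, -unanim L G = ∏ L ∈ T, ((-1) * unanim L G) := by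
          apply Finset.prod_congr rfl; intro L _; ring
      _ = (∏ _L ∈ T, (-1:ℝ)) * ∏ L ∈ T, unanim L G := Finset.prod_mul_distrib
      _ = (-1:ℝ)^T.card * ∏ L ∈ T, unanim L G := by rw [Finset.prod_const]
  rw [Finset.sum_congr rfl h2] at h
  rw [← h]
  have h3 : ∀ L ∈ LamSet A F, -unanim L G + 1 = if ¬ L ⊆ G then (1:ℝ) else 0 := by
    intro L _
    unfold unanim
    by_cases hL : L ⊆ G <;> simp [hL]
  rw [Finset.prod_congr rfl h3, Finset.prod_boole]
  by_cases hex : ∃ L ∈ LamSet A F, L ⊆ G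
  · obtain ⟨L, hL, hLG⟩ := hex
    have hna : ¬ ∀ L ∈ LamSet A F, ¬ L ⊆ G := fun hall => hall L hL hLG
    rw [if_neg hna, if_pos ⟨L, hL, hLG⟩]
  · have hall : ∀ L ∈ LamSet A F, ¬ L ⊆ G := by push_neg at hex; exact hex
    rw [if_pos hall, if_neg hex]

include hempty hunion in
lemma expand (F G : Finset α) :
    unanim F (autPartA A G)
      = ∑ T ∈ (LamSet A F).powerset,
          (if T = (∅ : Finset (Finset α)) then 0 else -(-1:ℝ)^T.card)
            * unanim (T.sup id) G := by
  rw [unanim_autPart A hempty hunion]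
  have key : ∑ T ∈ (LamSet A F).powerset,
      (if T = (∅ : Finset (Finset α)) then 0 else -(-1:ℝ)^T.card) * unanim (T.sup id) G
      = ∑ T ∈ (LamSet A F).powerset,
          ((if T = (∅ : Finset (Finset α)) then (1:ℝ) else 0)
            - (-1:ℝ)^T.card * unanim (T.sup id) G) := by
    apply Finset.sum_congr rfl
    intro T _
    by_cases hT : T = ∅
    · subst hT
      simp [unanim]
    · rw [if_neg hT, if_neg hT]
      ring
  rw [key, Finset.sum_sub_distrib, prod_expand, Finset.sum_ite_eq' _ (∅ : Finset (Finset α))]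
  simp only [Finset.empty_mem_powerset, if_true]
  by_cases hex : ∃ L ∈ LamSet A F, L ⊆ G <;> simp [hex]

include hempty hunion in
lemma lamStar_memA {F E : Finset α} (h : LamStar A F E) : E ∈ A := by
  obtain ⟨T, hT, _, rfl⟩ := h
  exact sup_mem_A A hempty hunion T (fun x hx => (lamSet_mem A (hT hx)).1)

include hempty hunion in
lemma dividend_PuF {F E : Finset α} (h : ¬ LamStar A F E) :
    dividend (fun G => unanim F (autPartA A G)) E = 0 := by
  have hfun : (fun G => unanim F (autPartA A G))
      = fun G => ∑ T ∈ (LamSet A F).powerset,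
          (if T = (∅ : Finset (Finset α)) then 0 else -(-1:ℝ)^T.card)
            * unanim (T.sup id) G := funext (expand A hempty hunion F)
  rw [hfun, dividend_linear]
  apply Finset.sum_eq_zero
  intro T hT
  by_cases hT0 : T = ∅
  · simp [hT0]
  · rw [dividend_unanim]
    by_cases hE : E = T.sup id
    · exact absurd ⟨T, Finset.mem_powerset.1 hT, Finset.nonempty_of_ne_empty hT0, hE⟩ h
    · simp [hE]

end expand

lemma mobius' {α : Type*} [Fintype α] [DecidableEq α] (w : Finset α → ℝ) (G : Finset α) :
    w G = ∑ E ∈ (univ : Finset α).powerset, dividend w E * unanim E G := by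
  have h1 : ∀ E ∈ (univ : Finset α).powerset, dividend w E * unanim E G
      = if E ⊆ G then dividend w E else 0 := by
    intro E _
    unfold unanim
    by_cases h : E ⊆ G <;> simp [h]
  rw [Finset.sum_congr rfl h1, ← Finset.sum_filter]
  have h2 : (univ : Finset α).powerset.filter (fun E => E ⊆ G) = G.powerset := by
    ext E
    simp [Finset.mem_filter, Finset.mem_powerset]
  rw [h2, mobius]

theorem stmt18 {α : Type*} [Fintype α] [DecidableEq α]
    (A : Finset (Finset α)) (hempty : ∅ ∈ A) (huniv : univ ∈ A)
    (hunion : ∀ E ∈ A, ∀ F ∈ A, E ∪ F ∈ A)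
    (v : Finset α → ℝ) (hv0 : v ∅ = 0) :
    ∀ G : Finset α,
      v (autPartA A G)
        = ∑ E ∈ A,
            (∑ F ∈ (univ : Finset α).powerset,
              if LamStar A F E then
                dividend (fun G' => unanim F (autPartA A G')) E * dividend v F
              else 0)
            * unanim E G := by
  intro G
  set w : Finset α → ℝ := fun G' => v (autPartA A G') with hw
  have hwfun : w = fun G' => ∑ F ∈ (univ : Finset α).powerset,
      dividend v F * unanim F (autPartA A G') := by
    funext G'
    exact mobius' v (autPartA A G')
  have stepB : ∀ E : Finset α, dividend w E
      = ∑ F ∈ (univ : Finset α).powerset,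
          dividend v F * dividend (fun G' => unanim F (autPartA A G')) E := by
    intro E
    rw [hwfun, dividend_linear]
  have hsub : A ⊆ (univ : Finset α).powerset := by
    intro E _
    exact Finset.mem_powerset.2 (Finset.subset_univ E)
  calc v (autPartA A G) = w G := rfl
    _ = ∑ E ∈ (univ : Finset α).powerset, dividend w E * unanim E G := mobius' w G
    _ = ∑ E ∈ (univ : Finset α).powerset,
          (∑ F ∈ (univ : Finset α).powerset,
            if LamStar A F E then
              dividend (fun G' => unanim F (autPartA A G')) E * dividend v F
            else 0) * unanim E G := by
        apply Finset.sum_congr rfl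
        intro E _
        congr 1
        rw [stepB]
        apply Finset.sum_congr rfl
        intro F _
        by_cases h : LamStar A F E
        · rw [if_pos h]
          ring
        · rw [if_neg h, dividend_PuF A hempty hunion h, mul_zero]
    _ = ∑ E ∈ A,
          (∑ F ∈ (univ : Finset α).powerset,
            if LamStar A F E then
              dividend (fun G' => unanim F (autPartA A G')) E * dividend v F
            else 0) * unanim E G := by
        refine (Finset.sum_subset hsub ?_).symm
        intro E _ hEA
        have hin : ∀ F ∈ (univ : Finset α).powerset,
            (if LamStar A F E then
              dividend (fun G' => unanim F (autPartA A G')) E * dividend v F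
            else 0) = 0 := by
          intro F _
          rw [if_neg (fun h => hEA (lamStar_memA A hempty hunion h))]
        rw [Finset.sum_congr rfl hin, Finset.sum_const_zero, zero_mul]
end
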